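/- For Rules 134, 142, 150, and 156 on a ring of size n, the parallel fixed points are exactly: 0^n and 1^n when n is odd; and 0^n, 1^n, (01)^{n/2}, and (10)^{n/2} when n is even. -/
import Mathlib


/-- Single-cell update: replace the state of cell `i` by the local rule applied
to its neighborhood on the ring `ZMod n`. -/
def eupdate (n : ℕ) (f : Bool → Bool → Bool → Bool) (x : ZMod n → Bool) (i : ZMod n) :
    ZMod n → Bool :=
  Function.update x i (f (x (i - 1)) (x i) (x (i + 1)))

/-- Synchronous (parallel) step. -/
def parStep (n : ℕ) (f : Bool → Bool → Bool → Bool) (x : ZMod n → Bool) : ZMod n → Bool :=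
  fun i => f (x (i - 1)) (x i) (x (i + 1))

/-- `x` is a fixed point of the parallel dynamics. -/
def IsFixedConfig (n : ℕ) (f : Bool → Bool → Bool → Bool) (x : ZMod n → Bool) : Prop :=
  ∀ i : ZMod n, f (x (i - 1)) (x i) (x (i + 1)) = x i

/-- One full sequential step under the sequential update mode `μ`
(a permutation of the cells): update cells one at a time in the order
`μ 0, μ 1, …, μ (n-1)`. -/
def seqStep (n : ℕ) (f : Bool → Bool → Bool → Bool) (μ : Fin n ≃ ZMod n)
    (x : ZMod n → Bool) : ZMod n → Bool :=
  (List.finRange n).foldl (fun y k => eupdate n f y (μ k)) x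

/-- One full sequential step under the descending order `(n-1, n-2, …, 0)`. -/
def seqStepDesc (n : ℕ) (f : Bool → Bool → Bool → Bool) (x : ZMod n → Bool) : ZMod n → Bool :=
  ((List.range n).reverse).foldl (fun y k => eupdate n f y (k : ZMod n)) x

/-- One full sequential step under the ascending order `(0, 1, …, n-1)`. -/
def seqStepAsc (n : ℕ) (f : Bool → Bool → Bool → Bool) (x : ZMod n → Bool) : ZMod n → Bool :=
  (List.range n).foldl (fun y k => eupdate n f y (k : ZMod n)) x

def rule134 : Bool → Bool → Bool → Bool
  | true, true, true => true
  | true, true, false => false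
  | true, false, true => false
  | true, false, false => false
  | false, true, true => false
  | false, true, false => true
  | false, false, true => true
  | false, false, false => false

def rule142 : Bool → Bool → Bool → Bool
  | true, true, true => true
  | true, true, false => false
  | true, false, true => false
  | true, false, false => false
  | false, true, true => true
  | false, true, false => true
  | false, false, true => true
  | false, false, false => false

def rule150 : Bool → Bool → Bool → Bool
  | true, true, true => true
  | true, true, false => false
  | true, false, true => false
  | true, false, false => true
  | false, true, true => false
  | false, true, false => true
  | false, false, true => true
  | false, false, false => false

def rule156 : Bool → Bool → Bool → Bool
  | true, true, true => true
  | true, true, false => false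
  | true, false, true => false
  | true, false, false => true
  | false, true, true => true
  | false, true, false => true
  | false, false, true => false
  | false, false, false => false


def Good (n : ℕ) (x : ZMod n → Bool) : Prop :=
  x = (fun _ => false) ∨ x = (fun _ => true) ∨
    (Even n ∧ ((∀ i : ZMod n, x i = decide (i.val % 2 = 0)) ∨
               (∀ i : ZMod n, x i = decide (i.val % 2 = 1))))

lemma castval {n : ℕ} [NeZero n] (a : ZMod n) : ((a.val : ℕ) : ZMod n) = a :=
  ZMod.natCast_rightInverse a

lemma val_succ {n : ℕ} (hn : Even n) (h2 : 1 < n) (i : ZMod n) :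
    (i + 1).val % 2 = (i.val + 1) % 2 := by
  haveI : NeZero n := ⟨by omega⟩
  haveI : Fact (1 < n) := ⟨h2⟩
  have h1 : (i + 1).val = (i.val + (1 : ZMod n).val) % n := ZMod.val_add i 1
  rw [ZMod.val_one n] at h1
  have hv : i.val < n := ZMod.val_lt i
  obtain ⟨k, hk⟩ := hn
  rcases Nat.lt_or_ge (i.val + 1) n with hlt | hge
  · rw [Nat.mod_eq_of_lt hlt] at h1
    omega
  · have : i.val + 1 = n := by omega
    rw [this, Nat.mod_self] at h1
    omega

lemma val_pred {n : ℕ} (hn : Even n) (h2 : 1 < n) (i : ZMod n) :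
    (i - 1).val % 2 = (i.val + 1) % 2 := by
  have := val_succ hn h2 (i - 1)
  rw [sub_add_cancel] at this
  omega

lemma lemConst {n : ℕ} (hn : 0 < n) (x : ZMod n → Bool)
    (h : ∀ i : ZMod n, x (i - 1) = x i → x (i + 1) = x i)
    (i : ZMod n) (hi : x i = x (i + 1)) : ∀ j, x j = x i := by
  haveI : NeZero n := ⟨by omega⟩
  have key : ∀ k : ℕ, x (i + k) = x i ∧ x (i + k + 1) = x i := by
    intro k
    induction k with
    | zero => simpa using hi.symm
    | succ m ih =>
      obtain ⟨h1, h2⟩ := ih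
      have hcast : ((m + 1 : ℕ) : ZMod n) = (m : ZMod n) + 1 := by push_cast; ring
      constructor
      · rw [hcast, ← add_assoc]; exact h2
      · rw [hcast, ← add_assoc]
        have h3 := h (i + m + 1)
        rw [add_sub_cancel_right] at h3
        rw [h3 (h1.trans h2.symm), h2]
  intro j
  have := (key (j - i).val).1
  rwa [castval, add_sub_cancel] at this

lemma lemA {n : ℕ} (hn : 0 < n) (x : ZMod n → Bool)
    (h : ∀ i : ZMod n, x (i - 1) = x i → x (i + 1) = x i) : Good n x := by
  haveI : NeZero n := ⟨by omega⟩
  by_cases hc : ∃ i : ZMod n, x i = x (i + 1)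
  · obtain ⟨i, hi⟩ := hc
    have hconst := lemConst hn x h i hi
    cases hxi : x i with
    | false => left; funext j; rw [hconst j, hxi]
    | true => right; left; funext j; rw [hconst j, hxi]
  · push_neg at hc
    have hflip : ∀ i : ZMod n, x (i + 1) = !(x i) := by
      intro i; have := hc i; cases h1 : x i <;> cases h2 : x (i + 1) <;> simp_all
    have key : ∀ k : ℕ, x ((k : ℕ) : ZMod n) = ((decide (k % 2 = 1)).xor (x 0)) := by
      intro k; induction k with
      | zero => simp
      | succ m ih =>
        have hcast : ((m + 1 : ℕ) : ZMod n) = (m : ZMod n) + 1 := by push_cast; ring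
        rw [hcast, hflip, ih]
        rcases Nat.mod_two_eq_zero_or_one m with hm | hm
        · have hm1 : (m + 1) % 2 = 1 := by omega
          simp [hm, hm1]
        · have hm1 : (m + 1) % 2 = 0 := by omega
          simp [hm, hm1]
    have hn0 : x ((n : ℕ) : ZMod n) = x 0 := by rw [ZMod.natCast_self]
    have hkn := key n
    rw [hn0] at hkn
    have heven : n % 2 = 0 := by
      rcases Nat.mod_two_eq_zero_or_one n with h0 | h0
      · exact h0
      · cases hx0 : x 0 <;> simp [hx0, h0] at hkn
    right; right
    refine ⟨Nat.even_iff.mpr heven, ?_⟩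
    cases hx0 : x 0 with
    | true =>
      left; intro j
      have := key j.val
      rw [castval] at this
      rw [this, hx0]
      rcases Nat.mod_two_eq_zero_or_one j.val with hj | hj <;> simp [hj]
    | false =>
      right; intro j
      have := key j.val
      rw [castval] at this
      rw [this, hx0]
      simp

lemma sub_val_even {n : ℕ} [NeZero n] (hne : Even n) (j j' : ZMod n)
    (hp : j.val % 2 = j'.val % 2) : (j' - j).val % 2 = 0 := by
  have hv := ZMod.val_add (j' - j) j
  rw [sub_add_cancel] at hv
  have hn2 : n % 2 = 0 := Nat.even_iff.mp hne
  have hdm := Nat.div_add_mod ((j' - j).val + j.val) n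
  have hmm := Nat.mul_mod n (((j' - j).val + j.val) / n) 2
  rw [hn2] at hmm
  simp at hmm
  omega

lemma lemB {n : ℕ} (hn : 0 < n) (x : ZMod n → Bool)
    (h : ∀ i : ZMod n, x (i - 1) = true → x (i + 1) = true) : Good n x := by
  haveI : NeZero n := ⟨by omega⟩
  have step : ∀ j : ZMod n, x j = true → x (j + 2) = true := by
    intro j hj
    have h3 := h (j + 1)
    rw [add_sub_cancel_right] at h3
    have h4 := h3 hj
    rw [show j + 1 + 1 = j + 2 by ring] at h4
    exact h4
  have prop : ∀ (k : ℕ) (j : ZMod n), x j = true → x (j + (2 * k : ℕ)) = true := by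
    intro k
    induction k with
    | zero => simpa using fun j h => h
    | succ m ih =>
      intro j hj
      have hcast : ((2 * (m + 1) : ℕ) : ZMod n) = ((2 * m : ℕ) : ZMod n) + 2 := by
        push_cast; ring
      rw [hcast, ← add_assoc]
      exact step _ (ih j hj)
  have trans2 : ∀ j j' : ZMod n, (j' - j).val % 2 = 0 → x j = true → x j' = true := by
    intro j j' hpar hj
    have hm : (j' - j).val = 2 * ((j' - j).val / 2) := by omega
    have := prop ((j' - j).val / 2) j hj
    rw [← hm, castval, show j + (j' - j) = j' by ring] at this
    exact this
  rcases Nat.even_or_odd n with hne | hno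
  · have h2 : 1 < n := by rcases hne with ⟨k, hk⟩; omega
    haveI : Fact (1 < n) := ⟨h2⟩
    have hpar : ∀ j j' : ZMod n, j.val % 2 = j'.val % 2 → x j = x j' := by
      intro j j' hp
      cases hxj : x j <;> cases hxj' : x j' <;> try rfl
      · exact absurd (trans2 j' j (sub_val_even hne j' j hp.symm) hxj') (by simp [hxj])
      · exact absurd (trans2 j j' (sub_val_even hne j j' hp) hxj) (by simp [hxj'])
    have hv0 : (0 : ZMod n).val = 0 := ZMod.val_zero
    have hv1 : (1 : ZMod n).val = 1 := ZMod.val_one n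
    have hform : ∀ j : ZMod n, x j = if j.val % 2 = 0 then x 0 else x 1 := by
      intro j
      rcases Nat.mod_two_eq_zero_or_one j.val with hj | hj
      · simp only [hj, if_pos rfl]
        exact hpar j 0 (by omega)
      · rw [hj]
        simp only [if_neg (by omega : ¬ (1 : ℕ) = 0)]
        exact hpar j 1 (by omega)
    cases hx0 : x 0 with
    | false =>
      cases hx1 : x 1 with
      | false =>
        left; funext j; rw [hform j]; simp [hx0, hx1]
      | true =>
        right; right
        refine ⟨hne, Or.inr fun j => ?_⟩
        rw [hform j]
        rcases Nat.mod_two_eq_zero_or_one j.val with hj | hj <;> simp [hj, hx0, hx1]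
    | true =>
      cases hx1 : x 1 with
      | false =>
        right; right
        refine ⟨hne, Or.inl fun j => ?_⟩
        rw [hform j]
        rcases Nat.mod_two_eq_zero_or_one j.val with hj | hj <;> simp [hj, hx0, hx1]
      | true =>
        right; left; funext j; rw [hform j]; simp [hx0, hx1]
  · by_cases hex : ∃ j, x j = true
    · obtain ⟨j, hj⟩ := hex
      right; left; funext j'
      show x j' = true
      have hmex : ∃ m : ℕ, ((2 * m : ℕ) : ZMod n) = j' - j := by
        rcases Nat.even_or_odd (j' - j).val with ⟨m, hm⟩ | hodd
        · exact ⟨m, by rw [show 2 * m = (j' - j).val by omega, castval]⟩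
        · refine ⟨((j' - j).val + n) / 2, ?_⟩
          have hh : 2 * (((j' - j).val + n) / 2) = (j' - j).val + n := by
            rcases hno with ⟨k, hk⟩; rcases hodd with ⟨k2, hk2⟩; omega
          rw [hh]
          push_cast [ZMod.natCast_self]
          rw [add_zero]
          exact castval _
      obtain ⟨m, hm⟩ := hmex
      have := prop m j hj
      rw [hm, show j + (j' - j) = j' by ring] at this
      exact this
    · push_neg at hex
      left; funext j
      simpa using hex j


lemma backward {n : ℕ} (f : Bool → Bool → Bool → Bool)
    (hfff : f false false false = false) (httt : f true true true = true)
    (hftf : f false true false = true) (htft : f true false true = false)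
    (x : ZMod n → Bool) (hn : 0 < n) (hg : Good n x) : IsFixedConfig n f x := by
  rcases hg with h | h | ⟨hne, h | h⟩
  · subst h; intro i; simpa using hfff
  · subst h; intro i; simpa using httt
  · intro i
    have h2 : 1 < n := by rcases hne with ⟨k, hk⟩; omega
    have e1 := val_succ hne h2 i
    have e2 := val_pred hne h2 i
    rw [h i, h (i + 1), h (i - 1)]
    rcases Nat.mod_two_eq_zero_or_one i.val with hp | hp
    · have q1 : (i + 1).val % 2 = 1 := by omega
      have q2 : (i - 1).val % 2 = 1 := by omega
      simp [hp, q1, q2, hftf]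
    · have q1 : (i + 1).val % 2 = 0 := by omega
      have q2 : (i - 1).val % 2 = 0 := by omega
      simp [hp, q1, q2, htft]
  · intro i
    have h2 : 1 < n := by rcases hne with ⟨k, hk⟩; omega
    have e1 := val_succ hne h2 i
    have e2 := val_pred hne h2 i
    rw [h i, h (i + 1), h (i - 1)]
    rcases Nat.mod_two_eq_zero_or_one i.val with hp | hp
    · have q1 : (i + 1).val % 2 = 1 := by omega
      have q2 : (i - 1).val % 2 = 1 := by omega
      simp [hp, q1, q2, htft]
    · have q1 : (i + 1).val % 2 = 0 := by omega
      have q2 : (i - 1).val % 2 = 0 := by omega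
      simp [hp, q1, q2, hftf]

theorem rules_134_142_150_156_fixed_points (n : ℕ) (hn : 0 < n) (x : ZMod n → Bool) :
    (IsFixedConfig n rule134 x ↔
      (x = (fun _ => false) ∨ x = (fun _ => true) ∨
        (Even n ∧ ((∀ i : ZMod n, x i = decide (i.val % 2 = 0)) ∨
                   (∀ i : ZMod n, x i = decide (i.val % 2 = 1)))))) ∧
    (IsFixedConfig n rule142 x ↔
      (x = (fun _ => false) ∨ x = (fun _ => true) ∨
        (Even n ∧ ((∀ i : ZMod n, x i = decide (i.val % 2 = 0)) ∨
                   (∀ i : ZMod n, x i = decide (i.val % 2 = 1)))))) ∧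
    (IsFixedConfig n rule150 x ↔
      (x = (fun _ => false) ∨ x = (fun _ => true) ∨
        (Even n ∧ ((∀ i : ZMod n, x i = decide (i.val % 2 = 0)) ∨
                   (∀ i : ZMod n, x i = decide (i.val % 2 = 1)))))) ∧
    (IsFixedConfig n rule156 x ↔
      (x = (fun _ => false) ∨ x = (fun _ => true) ∨
        (Even n ∧ ((∀ i : ZMod n, x i = decide (i.val % 2 = 0)) ∨
                   (∀ i : ZMod n, x i = decide (i.val % 2 = 1)))))) := by
  have good134 : IsFixedConfig n rule134 x → Good n x := by
    intro hfix
    refine lemA hn x fun i hi => ?_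
    have hf := hfix i
    cases h1 : x (i - 1) <;> cases h2 : x i <;> cases h3 : x (i + 1) <;>
      simp_all [rule134]
  have good142 : IsFixedConfig n rule142 x → Good n x := by
    intro hfix
    refine lemA hn x fun i hi => ?_
    have hf := hfix i
    cases h1 : x (i - 1) <;> cases h2 : x i <;> cases h3 : x (i + 1) <;>
      simp_all [rule142]
  have good150 : IsFixedConfig n rule150 x → Good n x := by
    intro hfix
    refine lemA hn x fun i hi => ?_
    have hf := hfix i
    cases h1 : x (i - 1) <;> cases h2 : x i <;> cases h3 : x (i + 1) <;>
      simp_all [rule150]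
  have good156 : IsFixedConfig n rule156 x → Good n x := by
    intro hfix
    refine lemB hn x fun i hi => ?_
    have hf := hfix i
    cases h1 : x (i - 1) <;> cases h2 : x i <;> cases h3 : x (i + 1) <;>
      simp_all [rule156]
  refine ⟨⟨good134, backward rule134 rfl rfl rfl rfl x hn⟩,
          ⟨good142, backward rule142 rfl rfl rfl rfl x hn⟩,
          ⟨good150, backward rule150 rfl rfl rfl rfl x hn⟩,
          ⟨good156, backward rule156 rfl rfl rfl rfl x hn⟩⟩
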